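/- arXiv:2405.16611 — 2 statements merged into one kernel-verified Lean document; each statement's English description precedes it below -/
import Mathlib

section
/- Each of the memory models SCM, TSO, and RA is well-behaved; that is, for each M ∈ {SCM, TSO, RA} there exists a simulation R from SCM to M whose codomain consists solely of stable states of M. -/
set_option autoImplicit false

namespace WMM

universe u v

/-! ### Memory actions and events -/

inductive MemAct (Var Val : Type) : Type where
  | write (x : Var) (v : Val)
  | read (x : Var) (v : Val)
  | rmw (x : Var) (vold vnew : Val)
  | fence

structure MemEv (Proc Var Val : Type) : Type where
  proc : Proc
  act : MemAct Var Val

section Mem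

variable {Proc Var Val : Type}

def MemEv.isWrite (e : MemEv Proc Var Val) : Prop := ∃ x v, e.act = MemAct.write x v
def MemEv.isRead (e : MemEv Proc Var Val) : Prop := ∃ x v, e.act = MemAct.read x v
def MemEv.isRMW (e : MemEv Proc Var Val) : Prop := ∃ x v w, e.act = MemAct.rmw x v w
def MemEv.isFence (e : MemEv Proc Var Val) : Prop := e.act = MemAct.fence

/-- The set of processes appearing in an observable memory sequence. -/
def memProcs (σ : List (MemEv Proc Var Val)) : Set Proc := {p | ∃ e ∈ σ, MemEv.proc e = p}

end Mem

/-! ### Shuffles -/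

/-- `Shuffle s1 s2 s` means `s` is an interleaving of `s1` and `s2`. -/
inductive Shuffle {α : Type u} : List α → List α → List α → Prop where
  | nil : Shuffle [] [] []
  | left {s1 s2 s : List α} (x : α) : Shuffle s1 s2 s → Shuffle (s1 ++ [x]) s2 (s ++ [x])
  | right {s1 s2 s : List α} (x : α) : Shuffle s1 s2 s → Shuffle s1 (s2 ++ [x]) (s ++ [x])

/-! ### Paths of a labeled transition relation -/

inductive LTSPath {S : Type u} {L : Type v} (step : S → L → S → Prop) : S → List L → S → Prop where
  | nil (s : S) : LTSPath step s [] s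
  | cons {s s' s'' : S} {l : L} {ls : List L} :
      step s l s' → LTSPath step s' ls s'' → LTSPath step s (l :: ls) s''

/-! ### Memory models -/

/-- A memory model: an LTS whose labels are memory events or the silent label `τ = none`. -/
structure MemModel (Proc Var Val : Type) : Type 1 where
  State : Type
  init : State
  step : State → Option (MemEv Proc Var Val) → State → Prop

section MemModel

variable {Proc Var Val : Type}

/-- A state is stable if no silent (`τ`) transition is enabled. -/
def MemModel.Stable (M : MemModel Proc Var Val) (q : M.State) : Prop :=
  ∀ q', ¬ M.step q none q'

/-- Observable memory sequences from a state: traces with `τ` steps erased. -/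
def MemModel.OTraces (M : MemModel Proc Var Val) (q : M.State) :
    Set (List (MemEv Proc Var Val)) :=
  {σ | ∃ (π : List (Option (MemEv Proc Var Val))) (q' : M.State),
      LTSPath M.step q π q' ∧ π.reduceOption = σ}

def WeaklyMergeable (M : MemModel Proc Var Val) (σ1 σ2 : List (MemEv Proc Var Val)) : Prop :=
  ∀ q0 : M.State, M.Stable q0 → σ1 ∈ M.OTraces q0 → σ2 ∈ M.OTraces q0 →
    ∃ σ, Shuffle σ1 σ2 σ ∧ σ ∈ M.OTraces q0

def StronglyMergeable (M : MemModel Proc Var Val) (σ1 σ2 : List (MemEv Proc Var Val)) : Prop :=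
  ∀ q0 : M.State, M.Stable q0 → σ1 ∈ M.OTraces q0 → σ2 ∈ M.OTraces q0 →
    ∀ σ, Shuffle σ1 σ2 σ → σ ∈ M.OTraces q0

/-- Weak/strong mergeability, selected by a Boolean flag. -/
def MemMergeable (strong : Bool) (M : MemModel Proc Var Val)
    (σ1 σ2 : List (MemEv Proc Var Val)) : Prop :=
  if strong then StronglyMergeable M σ1 σ2 else WeaklyMergeable M σ1 σ2

end MemModel

/-! ### The SCM, TSO and RA memory models -/

section Models

variable (Proc Var Val : Type)

inductive SCMStep [DecidableEq Var] :
    (Var → Val) → Option (MemEv Proc Var Val) → (Var → Val) → Prop where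
  | write (m : Var → Val) (p : Proc) (x : Var) (v : Val) :
      SCMStep m (some ⟨p, MemAct.write x v⟩) (Function.update m x v)
  | read (m : Var → Val) (p : Proc) (x : Var) :
      SCMStep m (some ⟨p, MemAct.read x (m x)⟩) m
  | rmw (m : Var → Val) (p : Proc) (x : Var) (vnew : Val) :
      SCMStep m (some ⟨p, MemAct.rmw x (m x) vnew⟩) (Function.update m x vnew)
  | fence (m : Var → Val) (p : Proc) :
      SCMStep m (some ⟨p, MemAct.fence⟩) m

def SCMModel [DecidableEq Var] [Zero Val] : MemModel Proc Var Val where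
  State := Var → Val
  init := fun _ => 0
  step := SCMStep Proc Var Val

inductive TSOStep [DecidableEq Proc] [DecidableEq Var] :
    (Var → Val) × (Proc → List (Var × Val)) → Option (MemEv Proc Var Val) →
      (Var → Val) × (Proc → List (Var × Val)) → Prop where
  | write (m : Var → Val) (b : Proc → List (Var × Val)) (p : Proc) (x : Var) (v : Val) :
      TSOStep (m, b) (some ⟨p, MemAct.write x v⟩)
        (m, Function.update b p (b p ++ [(x, v)]))
  | readBuffer (m : Var → Val) (b : Proc → List (Var × Val)) (p : Proc) (x : Var) (v : Val) :
      ((b p).filter (fun pr => decide (pr.1 = x))).getLast? = some (x, v) →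
      TSOStep (m, b) (some ⟨p, MemAct.read x v⟩) (m, b)
  | readMemory (m : Var → Val) (b : Proc → List (Var × Val)) (p : Proc) (x : Var) :
      (b p).filter (fun pr => decide (pr.1 = x)) = [] →
      TSOStep (m, b) (some ⟨p, MemAct.read x (m x)⟩) (m, b)
  | rmw (m : Var → Val) (b : Proc → List (Var × Val)) (p : Proc) (x : Var) (vnew : Val) :
      b p = [] →
      TSOStep (m, b) (some ⟨p, MemAct.rmw x (m x) vnew⟩) (Function.update m x vnew, b)
  | fence (m : Var → Val) (b : Proc → List (Var × Val)) (p : Proc) :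
      b p = [] → TSOStep (m, b) (some ⟨p, MemAct.fence⟩) (m, b)
  | propagate (m : Var → Val) (b : Proc → List (Var × Val)) (p : Proc) (x : Var) (v : Val)
      (β : List (Var × Val)) :
      b p = (x, v) :: β →
      TSOStep (m, b) none (Function.update m x v, Function.update b p β)

def TSOModel [DecidableEq Proc] [DecidableEq Var] [Zero Val] : MemModel Proc Var Val where
  State := (Var → Val) × (Proc → List (Var × Val))
  init := (fun _ => 0, fun _ => [])
  step := TSOStep Proc Var Val

/-- A message of the RA memory model. -/
structure RAMsg (Var Val : Type) : Type where
  var : Var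
  val : Val
  time : ℕ
  view : Var → ℕ

structure RAState (Proc Var Val : Type) : Type where
  mem : Set (RAMsg Var Val)
  view : Proc → Var → ℕ
  fview : Var → ℕ

end Models

/-- Pointwise join (maximum) of two views. -/
def viewJoin {Var : Type} (V1 V2 : Var → ℕ) : Var → ℕ := fun y => max (V1 y) (V2 y)

section RA

variable (Proc Var Val : Type)

inductive RAStep [DecidableEq Proc] [DecidableEq Var] :
    RAState Proc Var Val → Option (MemEv Proc Var Val) → RAState Proc Var Val → Prop where
  | write (s : RAState Proc Var Val) (p : Proc) (x : Var) (v : Val) (t : ℕ) :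
      s.view p x < t →
      (∀ μ ∈ s.mem, μ.var = x → μ.time ≠ t) →
      RAStep s (some ⟨p, MemAct.write x v⟩)
        ⟨insert ⟨x, v, t, Function.update (s.view p) x t⟩ s.mem,
         Function.update s.view p (Function.update (s.view p) x t), s.fview⟩
  | read (s : RAState Proc Var Val) (p : Proc) (x : Var) (v : Val) (V : Var → ℕ) :
      (⟨x, v, s.view p x, V⟩ : RAMsg Var Val) ∈ s.mem →
      RAStep s (some ⟨p, MemAct.read x v⟩) s
  | rmw (s : RAState Proc Var Val) (p : Proc) (x : Var) (vexp vnew : Val) (V : Var → ℕ) :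
      (⟨x, vexp, s.view p x, V⟩ : RAMsg Var Val) ∈ s.mem →
      (∀ μ ∈ s.mem, μ.var = x → μ.time ≠ s.view p x + 1) →
      RAStep s (some ⟨p, MemAct.rmw x vexp vnew⟩)
        ⟨insert ⟨x, vnew, s.view p x + 1, Function.update (s.view p) x (s.view p x + 1)⟩ s.mem,
         Function.update s.view p (Function.update (s.view p) x (s.view p x + 1)), s.fview⟩
  | fence (s : RAState Proc Var Val) (p : Proc) :
      RAStep s (some ⟨p, MemAct.fence⟩)
        ⟨s.mem, Function.update s.view p (viewJoin (s.view p) s.fview),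
         viewJoin (s.view p) s.fview⟩
  | propagate (s : RAState Proc Var Val) (p : Proc) (μ : RAMsg Var Val) :
      μ ∈ s.mem → s.view p μ.var < μ.time →
      RAStep s none
        ⟨s.mem, Function.update s.view p (viewJoin (s.view p) μ.view), s.fview⟩

def RAModel [DecidableEq Proc] [DecidableEq Var] [Zero Val] : MemModel Proc Var Val where
  State := RAState Proc Var Val
  init := ⟨{μ | ∃ x : Var, μ = ⟨x, 0, 0, fun _ => 0⟩}, fun _ _ => 0, fun _ => 0⟩
  step := RAStep Proc Var Val

end RA

/-! ### Well-behaved memory models -/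

section WellBehaved

variable {Proc Var Val : Type}

/-- Reachability by silent steps. -/
def TauReach (M : MemModel Proc Var Val) : M.State → M.State → Prop :=
  Relation.ReflTransGen (fun q q' => M.step q none q')

/-- A memory model is well-behaved if there is a simulation from SCM into its stable states. -/
def WellBehaved [DecidableEq Var] [Zero Val] (M : MemModel Proc Var Val) : Prop :=
  ∃ R : (Var → Val) → M.State → Prop,
    (∀ m q, R m q → M.Stable q) ∧
    R (fun _ => (0 : Val)) M.init ∧
    (∀ m q, R m q → ∀ (l : Option (MemEv Proc Var Val)) (m' : Var → Val),
      SCMStep Proc Var Val m l m' →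
      ∃ q1 q' : M.State, M.step q l q1 ∧ TauReach M q1 q' ∧ M.Stable q' ∧ R m' q')

end WellBehaved

/-! ### Patterns of observable memory sequences -/

section Patterns

variable {Proc Var Val : Type}

def IsSolo (σ : List (MemEv Proc Var Val)) : Prop :=
  ∀ e ∈ σ, ∀ e' ∈ σ, MemEv.proc e = MemEv.proc e'

def IsRW (σ : List (MemEv Proc Var Val)) : Prop :=
  ∀ e ∈ σ, MemEv.isWrite e ∨ MemEv.isRead e

def IsRWF (σ : List (MemEv Proc Var Val)) : Prop :=
  ∀ e ∈ σ, MemEv.isWrite e ∨ MemEv.isRead e ∨ MemEv.isFence e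

/-- Read-before-write: no read-after-write pattern on distinct variables. -/
def IsRBW (σ : List (MemEv Proc Var Val)) : Prop :=
  ∀ (k1 k2 : ℕ) (e1 e2 : MemEv Proc Var Val) (x y : Var) (v w : Val),
    k1 < k2 → σ[k1]? = some e1 → σ[k2]? = some e2 →
    e1.act = MemAct.write x v → e2.act = MemAct.read y w → x ≠ y →
    ∃ (k : ℕ) (e : MemEv Proc Var Val) (u : Val),
      k1 < k ∧ k < k2 ∧ σ[k]? = some e ∧ e.act = MemAct.write y u

/-- Trailing-fence: no fence is immediately followed by a non-fence event. -/
def IsTF (σ : List (MemEv Proc Var Val)) : Prop :=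
  ∀ (k : ℕ) (e e' : MemEv Proc Var Val),
    σ[k]? = some e → σ[k + 1]? = some e' → MemEv.isFence e → MemEv.isFence e'

/-- Leading-fence: no fence is immediately preceded by a non-fence event. -/
def IsLF (σ : List (MemEv Proc Var Val)) : Prop :=
  ∀ (k : ℕ) (e e' : MemEv Proc Var Val),
    σ[k]? = some e → σ[k + 1]? = some e' → MemEv.isFence e' → MemEv.isFence e

def IsLTF (σ : List (MemEv Proc Var Val)) : Prop :=
  ∃ σ' σ'' : List (MemEv Proc Var Val), σ = σ' ++ σ'' ∧ IsLF σ' ∧ IsTF σ''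

def IsPPTF [DecidableEq Proc] (σ : List (MemEv Proc Var Val)) : Prop :=
  ∀ p : Proc, IsTF (σ.filter (fun e => decide (e.proc = p)))

def IsPPLF [DecidableEq Proc] (σ : List (MemEv Proc Var Val)) : Prop :=
  ∀ p : Proc, IsLF (σ.filter (fun e => decide (e.proc = p)))

end Patterns

/-! ### Objects, events and histories -/

inductive ObjAct (Op Ret : Type) : Type where
  | inv (o : Op)
  | res (u : Ret)

structure ObjEv (Proc Op Ret : Type) : Type where
  proc : Proc
  act : ObjAct Op Ret

inductive EvAct (Var Val Op Ret : Type) : Type where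
  | mem (a : MemAct Var Val)
  | inv (o : Op)
  | res (u : Ret)

/-- A general event: a memory event or an object event of some process. -/
structure Ev (Proc Var Val Op Ret : Type) : Type where
  proc : Proc
  act : EvAct Var Val Op Ret

section Events

variable {Proc Var Val Op Ret : Type}

def ObjAct.isInv : ObjAct Op Ret → Prop
  | ObjAct.inv _ => True
  | _ => False

def ObjAct.isRes : ObjAct Op Ret → Prop
  | ObjAct.res _ => True
  | _ => False

def Ev.toMem : Ev Proc Var Val Op Ret → Option (MemEv Proc Var Val)
  | ⟨p, EvAct.mem a⟩ => some ⟨p, a⟩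
  | _ => none

def Ev.toObj : Ev Proc Var Val Op Ret → Option (ObjEv Proc Op Ret)
  | ⟨p, EvAct.inv o⟩ => some ⟨p, ObjAct.inv o⟩
  | ⟨p, EvAct.res u⟩ => some ⟨p, ObjAct.res u⟩
  | _ => none

/-- Restriction of an event sequence to its memory events. -/
def restrictMem (π : List (Ev Proc Var Val Op Ret)) : List (MemEv Proc Var Val) :=
  π.filterMap Ev.toMem

/-- Restriction of an event sequence to its object events. -/
def restrictObj (π : List (Ev Proc Var Val Op Ret)) : List (ObjEv Proc Op Ret) :=
  π.filterMap Ev.toObj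

def procsEv (π : List (Ev Proc Var Val Op Ret)) : Set Proc := {p | ∃ e ∈ π, Ev.proc e = p}

def procsObj (h : List (ObjEv Proc Op Ret)) : Set Proc := {p | ∃ e ∈ h, ObjEv.proc e = p}

def Ev.isWriteEv (e : Ev Proc Var Val Op Ret) : Prop :=
  ∃ x v, e.act = EvAct.mem (MemAct.write x v)

def Ev.isReadEv (e : Ev Proc Var Val Op Ret) : Prop :=
  ∃ x v, e.act = EvAct.mem (MemAct.read x v)

def Ev.isResEv (e : Ev Proc Var Val Op Ret) : Prop := ∃ u, e.act = EvAct.res u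

def Ev.isFenceEv (e : Ev Proc Var Val Op Ret) : Prop := e.act = EvAct.mem MemAct.fence

/-- The two-event history `⟨p : o ⇒ u⟩`. -/
def invres (p : Proc) (o : Op) (u : Ret) : List (ObjEv Proc Op Ret) :=
  [⟨p, ObjAct.inv o⟩, ⟨p, ObjAct.res u⟩]

/-- Complete sequential histories: concatenations of matching invocation–response pairs. -/
inductive CompleteSeq : List (ObjEv Proc Op Ret) → Prop where
  | nil : CompleteSeq []
  | cons (p : Proc) (o : Op) (u : Ret) {h : List (ObjEv Proc Op Ret)} :
      CompleteSeq h → CompleteSeq (⟨p, ObjAct.inv o⟩ :: ⟨p, ObjAct.res u⟩ :: h)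

/-- Sequential histories: prefixes of complete sequential histories. -/
def Sequential (h : List (ObjEv Proc Op Ret)) : Prop :=
  ∃ h' : List (ObjEv Proc Op Ret), CompleteSeq h' ∧ h <+: h'

def WellFormed [DecidableEq Proc] (h : List (ObjEv Proc Op Ret)) : Prop :=
  ∀ p : Proc, Sequential (h.filter (fun e => decide (e.proc = p)))

/-- Complete histories: well-formed, and each process's restriction is empty or
ends with a response event. -/
def CompleteH [DecidableEq Proc] (h : List (ObjEv Proc Op Ret)) : Prop :=
  WellFormed h ∧
    ∀ p : Proc, h.filter (fun e => decide (e.proc = p)) = [] ∨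
      ∃ e : ObjEv Proc Op Ret,
        (h.filter (fun e => decide (e.proc = p))).getLast? = some e ∧ e.act.isRes

end Events

/-! ### Reorderings and linearization -/

/-- `Reorder R s s'` : `s'` is an `R`-reordering of `s`. -/
def Reorder {α : Type u} (R : α → α → Prop) (s s' : List α) : Prop :=
  ∃ f : Fin s.length ≃ Fin s'.length,
    (∀ i : Fin s.length, s'.get (f i) = s.get i) ∧
    ∀ i j : Fin s.length, i < j → R (s.get i) (s.get j) → f i < f j

section Lin

variable {Proc Var Val Op Ret : Type}

/-- The `sproc` relation on general events: same process. -/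
def sprocEv (e1 e2 : Ev Proc Var Val Op Ret) : Prop := e1.proc = e2.proc

/-- The `lin` relation on object events. -/
def linRel (e1 e2 : ObjEv Proc Op Ret) : Prop :=
  e1.proc = e2.proc ∨ (e1.act.isRes ∧ e2.act.isInv)

/-- `h ⊑ H'`: some history in `H'` linearizes `h`. -/
def LinInto (Spec : Set (List (ObjEv Proc Op Ret))) (h : List (ObjEv Proc Op Ret)) : Prop :=
  ∃ h' ∈ Spec, Reorder linRel h h'

/-- A specification: a prefix-closed set of complete sequential histories. -/
def IsSpec (Spec : Set (List (ObjEv Proc Op Ret))) : Prop :=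
  (∀ h ∈ Spec, CompleteSeq h) ∧
  (∀ h ∈ Spec, ∀ h' : List (ObjEv Proc Op Ret), h' <+: h → CompleteSeq h' → h' ∈ Spec)

/-- A deterministic object: no two specification histories have a longest common prefix
ending with an invocation. -/
def Deterministic (Spec : Set (List (ObjEv Proc Op Ret))) : Prop :=
  ∀ h1 ∈ Spec, ∀ h2 ∈ Spec, ∀ (g : List (ObjEv Proc Op Ret)) (p : Proc) (o : Op),
    (g ++ [⟨p, ObjAct.inv o⟩]) <+: h1 → (g ++ [⟨p, ObjAct.inv o⟩]) <+: h2 →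
    ∃ e : ObjEv Proc Op Ret,
      (g ++ [⟨p, ObjAct.inv o⟩, e]) <+: h1 ∧ (g ++ [⟨p, ObjAct.inv o⟩, e]) <+: h2

def WeaklySpecMergeableAfter (Spec : Set (List (ObjEv Proc Op Ret)))
    (h0 h1 h2 : List (ObjEv Proc Op Ret)) : Prop :=
  LinInto Spec (h0 ++ h1) → LinInto Spec (h0 ++ h2) →
    ∃ h, Shuffle h1 h2 h ∧ LinInto Spec (h0 ++ h)

def StronglySpecMergeableAfter (Spec : Set (List (ObjEv Proc Op Ret)))
    (h0 h1 h2 : List (ObjEv Proc Op Ret)) : Prop :=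
  LinInto Spec (h0 ++ h1) → LinInto Spec (h0 ++ h2) →
    ∀ h, Shuffle h1 h2 h → LinInto Spec (h0 ++ h)

def SpecMergeableAfter (strong : Bool) (Spec : Set (List (ObjEv Proc Op Ret)))
    (h0 h1 h2 : List (ObjEv Proc Op Ret)) : Prop :=
  if strong then StronglySpecMergeableAfter Spec h0 h1 h2
  else WeaklySpecMergeableAfter Spec h0 h1 h2

/-- One-sided non-commutativity. -/
def OneSidedNonComm (Spec : Set (List (ObjEv Proc Op Ret))) (o1 o2 : Op) : Prop :=
  ∃ (h0 : List (ObjEv Proc Op Ret)) (p1 p2 : Proc) (u1 v1 u2 : Ret),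
    CompleteSeq h0 ∧ p1 ≠ p2 ∧ u1 ≠ v1 ∧
    h0 ++ invres p1 o1 u1 ∈ Spec ∧
    h0 ++ invres p2 o2 u2 ++ invres p1 o1 v1 ∈ Spec

/-- Two-sided non-commutativity. -/
def TwoSidedNonComm (Spec : Set (List (ObjEv Proc Op Ret))) (o1 o2 : Op) : Prop :=
  ∃ (h0 : List (ObjEv Proc Op Ret)) (p1 p2 : Proc) (u1 v1 u2 v2 : Ret),
    CompleteSeq h0 ∧ p1 ≠ p2 ∧ u1 ≠ v1 ∧ u2 ≠ v2 ∧
    h0 ++ invres p1 o1 u1 ++ invres p2 o2 v2 ∈ Spec ∧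
    h0 ++ invres p2 o2 u2 ++ invres p1 o1 v1 ∈ Spec

end Lin

/-! ### Implementations -/

/-- An implementation of an operation for a process `p`: an LTS labeled by events of `p`
in which a response event is always the last transition. -/
structure OpImpl (Proc Var Val Op Ret : Type) (p : Proc) : Type 1 where
  State : Type
  init : State
  step : State → Ev Proc Var Val Op Ret → State → Prop
  proc_eq : ∀ q e q', step q e q' → Ev.proc e = p
  res_final : ∀ (q : State) (u : Ret) (q' : State),
    step q ⟨p, EvAct.res u⟩ q' → ∀ e q'', ¬ step q' e q''

section Impl

variable {Proc Var Val Op Ret : Type}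

def OpImpl.traces {p : Proc} (Iop : OpImpl Proc Var Val Op Ret p) :
    Set (List (Ev Proc Var Val Op Ret)) :=
  {π | ∃ q : Iop.State, LTSPath Iop.step Iop.init π q}

/-- An implementation of an object. -/
def Impl (Proc Var Val Op Ret : Type) : Type 1 :=
  (o : Op) → (p : Proc) → OpImpl Proc Var Val Op Ret p

/-- Per-process states of the system induced by an implementation: `none` is idle. -/
def SIPState (I : Impl Proc Var Val Op Ret) (p : Proc) : Type :=
  Option ((o : Op) × (I o p).State)

/-- Per-process transitions of the system induced by an implementation. -/
inductive SIPStep (I : Impl Proc Var Val Op Ret) (p : Proc) :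
    SIPState I p → Ev Proc Var Val Op Ret → SIPState I p → Prop where
  | invoke (o : Op) :
      SIPStep I p none ⟨p, EvAct.inv o⟩ (some ⟨o, (I o p).init⟩)
  | memStep {o : Op} {q q' : (I o p).State} (a : MemAct Var Val) :
      (I o p).step q ⟨p, EvAct.mem a⟩ q' →
      SIPStep I p (some ⟨o, q⟩) ⟨p, EvAct.mem a⟩ (some ⟨o, q'⟩)
  | resStep {o : Op} {q q' : (I o p).State} (u : Ret) :
      (I o p).step q ⟨p, EvAct.res u⟩ q' →
      SIPStep I p (some ⟨o, q⟩) ⟨p, EvAct.res u⟩ none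

def SIState (I : Impl Proc Var Val Op Ret) : Type :=
  (p : Proc) → SIPState I p

/-- The system induced by an implementation interleaves the processes. -/
inductive SIStep [DecidableEq Proc] (I : Impl Proc Var Val Op Ret) :
    SIState I → Ev Proc Var Val Op Ret → SIState I → Prop where
  | mk (s : SIState I) (p : Proc) (e : Ev Proc Var Val Op Ret) (t : SIPState I p) :
      SIPStep I p (s p) e t → SIStep I s e (Function.update s p t)

def ImplTraces [DecidableEq Proc] (I : Impl Proc Var Val Op Ret) :
    Set (List (Ev Proc Var Val Op Ret)) :=
  {π | ∃ s : SIState I, LTSPath (SIStep I) (fun _ => none) π s}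

/-- Histories generated by `I` after `π0` under memory model `M`. -/
def GenHist [DecidableEq Proc] (π0 : List (Ev Proc Var Val Op Ret))
    (I : Impl Proc Var Val Op Ret) (M : MemModel Proc Var Val) :
    Set (List (ObjEv Proc Op Ret)) :=
  {h | ∃ π : List (Ev Proc Var Val Op Ret),
      π0 ++ π ∈ ImplTraces I ∧ restrictObj π = h ∧
      restrictMem (π0 ++ π) ∈ M.OTraces M.init}

/-- Consistency: every complete generated history linearizes into the specification. -/
def Consistent [DecidableEq Proc] (I : Impl Proc Var Val Op Ret)
    (M : MemModel Proc Var Val) (Spec : Set (List (ObjEv Proc Op Ret))) : Prop :=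
  ∀ h ∈ GenHist [] I M, CompleteH h → LinInto Spec h

/-- Availability after `h0` w.r.t. `h`. -/
def AvailableAfter [DecidableEq Proc] [DecidableEq Var] [Zero Val]
    (I : Impl Proc Var Val Op Ret) (h0 h : List (ObjEv Proc Op Ret)) : Prop :=
  ∀ π0 ∈ ImplTraces I,
    restrictMem π0 ∈ (SCMModel Proc Var Val).OTraces (SCMModel Proc Var Val).init →
    restrictObj π0 = h0 →
    h ∈ GenHist π0 I (SCMModel Proc Var Val)

def SpecAvailable [DecidableEq Proc] [DecidableEq Var] [Zero Val]
    (I : Impl Proc Var Val Op Ret) (Spec : Set (List (ObjEv Proc Op Ret))) : Prop :=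
  ∀ h0 h : List (ObjEv Proc Op Ret), CompleteSeq h0 → CompleteSeq h →
    h0 ++ h ∈ Spec → AvailableAfter I h0 h

end Impl

/-! ### Fence insertion -/

section Fence

variable {Proc Var Val Op Ret : Type}

/-- `FenceInsertion π π'` : `π'` is obtained from `π` by inserting fence events. -/
inductive FenceInsertion : List (Ev Proc Var Val Op Ret) → List (Ev Proc Var Val Op Ret) → Prop where
  | nil : FenceInsertion [] []
  | keep (e : Ev Proc Var Val Op Ret) {π π' : List (Ev Proc Var Val Op Ret)} :
      FenceInsertion π π' → FenceInsertion (e :: π) (e :: π')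
  | fence (p : Proc) {π π' : List (Ev Proc Var Val Op Ret)} :
      FenceInsertion π π' → FenceInsertion π (⟨p, EvAct.mem MemAct.fence⟩ :: π')

/-- Every write is separated from every later read or response by a fence. -/
def FencedWrites (π : List (Ev Proc Var Val Op Ret)) : Prop :=
  ∀ (i j : ℕ) (ei ej : Ev Proc Var Val Op Ret),
    i < j → π[i]? = some ei → π[j]? = some ej →
    Ev.isWriteEv ei → (Ev.isReadEv ej ∨ Ev.isResEv ej) →
    ∃ (k : ℕ) (ek : Ev Proc Var Val Op Ret),
      i < k ∧ k < j ∧ π[k]? = some ek ∧ Ev.isFenceEv ek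

/-- Histories generated by `I` under `M` (from the initial state). -/
def GeneratedHistories [DecidableEq Proc] (I : Impl Proc Var Val Op Ret)
    (M : MemModel Proc Var Val) : Set (List (ObjEv Proc Op Ret)) :=
  {h | ∃ π ∈ ImplTraces I, restrictObj π = h ∧ restrictMem π ∈ M.OTraces M.init}

end Fence

/-! ### The snapshot object -/

inductive SnapOp (W : Type) : Type where
  | update (w : W)
  | scan

inductive SnapRet (Proc W : Type) : Type where
  | ack
  | vec (v : Proc → Option W)

section Snapshot

variable {Proc W : Type}

/-- The sequential specification of the single-writer snapshot object, threaded
through the current contents `s`. -/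
inductive SnapSpecFrom [DecidableEq Proc] :
    (Proc → Option W) → List (ObjEv Proc (SnapOp W) (SnapRet Proc W)) → Prop where
  | nil (s : Proc → Option W) : SnapSpecFrom s []
  | update (s : Proc → Option W) (p : Proc) (w : W)
      {h : List (ObjEv Proc (SnapOp W) (SnapRet Proc W))} :
      SnapSpecFrom (Function.update s p (some w)) h →
      SnapSpecFrom s (⟨p, ObjAct.inv (SnapOp.update w)⟩ :: ⟨p, ObjAct.res SnapRet.ack⟩ :: h)
  | scan (s : Proc → Option W) (p : Proc)
      {h : List (ObjEv Proc (SnapOp W) (SnapRet Proc W))} :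
      SnapSpecFrom s h →
      SnapSpecFrom s (⟨p, ObjAct.inv SnapOp.scan⟩ :: ⟨p, ObjAct.res (SnapRet.vec s)⟩ :: h)

def SnapSpec (Proc W : Type) [DecidableEq Proc] :
    Set (List (ObjEv Proc (SnapOp W) (SnapRet Proc W))) :=
  {h | SnapSpecFrom (fun _ => none) h}

end Snapshot

/-! ### Auxiliary lemmas for STATEMENT 0 -/

section Aux

variable {Proc Var Val : Type}

/-- SCM is well-behaved. -/
lemma scm_wellBehaved [DecidableEq Var] [Zero Val] :
    WellBehaved (SCMModel Proc Var Val) := by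
  refine ⟨fun m q => q = m, ?_, rfl, ?_⟩
  · intro m q hq q' hstep
    cases hstep
  · rintro m q rfl l m' hstep
    have hst : (SCMModel Proc Var Val).Stable m' := by
      intro q' h
      cases h
    exact ⟨m', m', hstep, Relation.ReflTransGen.refl, hst, rfl⟩

/-- TSO is well-behaved. -/
lemma tso_wellBehaved [DecidableEq Proc] [DecidableEq Var] [Zero Val] :
    WellBehaved (TSOModel Proc Var Val) := by
  have hstable : ∀ m : Var → Val,
      (TSOModel Proc Var Val).Stable (m, fun _ => []) := by
    intro m q' h
    cases h with
    | propagate _ _ p x v β hb => exact absurd hb (by simp)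
  refine ⟨fun m q => q = (m, fun _ => []), ?_, rfl, ?_⟩
  · rintro m q rfl
    exact hstable m
  · rintro m q rfl l m' hstep
    cases hstep with
    | write p x v =>
        refine ⟨(m, Function.update (fun _ => []) p [(x, v)]),
          (Function.update m x v, fun _ => []), ?_, ?_, hstable _, rfl⟩
        · have := TSOStep.write (Val := Val) m (fun _ => []) p x v
          exact this
        · apply Relation.ReflTransGen.single
          have := TSOStep.propagate (Val := Val) m
            (Function.update (fun _ => []) p [(x, v)]) p x v []
            (by simp)
          have hb : Function.update (Function.update (fun _ => ([] : List (Var × Val))) p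
              [(x, v)]) p [] = fun _ => [] := by
            funext q
            rcases eq_or_ne q p with rfl | hq <;> simp [Function.update_of_ne, *]
          rw [hb] at this
          exact this
    | read p x =>
        exact ⟨(m, fun _ => []), (m, fun _ => []),
          TSOStep.readMemory m (fun _ => []) p x (by simp),
          Relation.ReflTransGen.refl, hstable _, rfl⟩
    | rmw p x vnew =>
        exact ⟨(Function.update m x vnew, fun _ => []), (Function.update m x vnew, fun _ => []),
          TSOStep.rmw m (fun _ => []) p x vnew rfl,
          Relation.ReflTransGen.refl, hstable _, rfl⟩
    | fence p =>
        exact ⟨(m, fun _ => []), (m, fun _ => []),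
          TSOStep.fence m (fun _ => []) p rfl,
          Relation.ReflTransGen.refl, hstable _, rfl⟩

/-- The simulation invariant for RA: all process views agree on a common view `T`,
the message at the current view of each variable holds the SCM value, all
timestamps are dominated by `T`, and so is the fence view. -/
def RAInv (m : Var → Val) (q : RAState Proc Var Val) : Prop :=
  ∃ T : Var → ℕ,
    (∀ p, q.view p = T) ∧
    (∀ x, ∃ V, (⟨x, m x, T x, V⟩ : RAMsg Var Val) ∈ q.mem) ∧
    (∀ μ ∈ q.mem, μ.time ≤ T μ.var) ∧
    (∀ y, q.fview y ≤ T y)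

lemma ra_stable [DecidableEq Proc] [DecidableEq Var] [Zero Val]
    (q : RAState Proc Var Val) (T : Var → ℕ)
    (hVp : ∀ p, q.view p = T) (htimes : ∀ μ ∈ q.mem, μ.time ≤ T μ.var) :
    (RAModel Proc Var Val).Stable q := by
  intro q' h
  cases h with
  | propagate p μ hμ hlt =>
      rw [hVp] at hlt
      exact absurd hlt (not_lt.2 (htimes μ hμ))

/-- Silent propagation steps can spread a fresh message's view to every process
in a list. -/
lemma ra_tau_spread [DecidableEq Proc] [DecidableEq Var] [Zero Val]
    (mem : Set (RAMsg Var Val)) (fv : Var → ℕ) (μ : RAMsg Var Val) (hμ : μ ∈ mem)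
    (T T' : Var → ℕ) (hx : T μ.var < μ.time) (hjoin : viewJoin T μ.view = T')
    (l : List Proc) :
    ∀ Vp : Proc → Var → ℕ, (∀ q, Vp q = T ∨ Vp q = T') →
      TauReach (RAModel Proc Var Val)
        ⟨mem, Vp, fv⟩ ⟨mem, (fun q => if q ∈ l then T' else Vp q), fv⟩ := by
  induction l with
  | nil =>
      intro Vp hVp
      have h : (fun q => if q ∈ ([] : List Proc) then T' else Vp q) = Vp := by
        funext q; simp
      rw [h]
      exact Relation.ReflTransGen.refl
  | cons a l ih =>
      intro Vp hVp
      have hstep : TauReach (RAModel Proc Var Val)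
          ⟨mem, Vp, fv⟩ ⟨mem, Function.update Vp a T', fv⟩ := by
        rcases hVp a with h | h
        · apply Relation.ReflTransGen.single
          have hs := RAStep.propagate (Proc := Proc) (Var := Var) (Val := Val)
            ⟨mem, Vp, fv⟩ a μ hμ (by simpa [h] using hx)
          have hv : viewJoin ((⟨mem, Vp, fv⟩ : RAState Proc Var Val).view a) μ.view = T' := by
            show viewJoin (Vp a) μ.view = T'
            rw [h, hjoin]
          rw [hv] at hs
          exact hs
        · have hupd : Function.update Vp a T' = Vp := by
            funext q
            rcases eq_or_ne q a with rfl | hq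
            · simp [h]
            · simp [Function.update_of_ne hq]
          rw [hupd]
          exact Relation.ReflTransGen.refl
      refine hstep.trans ?_
      have hVp' : ∀ q, Function.update Vp a T' q = T ∨ Function.update Vp a T' q = T' := by
        intro q
        rcases eq_or_ne q a with rfl | hq
        · right; simp
        · simpa [Function.update_of_ne hq] using hVp q
      have hrec := ih (Function.update Vp a T') hVp'
      have heq : (fun q => if q ∈ l then T' else Function.update Vp a T' q)
          = (fun q => if q ∈ a :: l then T' else Vp q) := by
        funext q
        by_cases hql : q ∈ l
        · simp [hql]
        · rcases eq_or_ne q a with rfl | hq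
          · simp [hql]
          · simp [hql, hq, Function.update_of_ne hq]
      rw [heq] at hrec
      exact hrec

/-- After inserting a fresh message with timestamp `T x + 1` and updating the
writer's view, silent steps reach a stable state satisfying the invariant. -/
lemma ra_write_aux [Fintype Proc] [DecidableEq Proc] [DecidableEq Var] [Zero Val]
    (mem : Set (RAMsg Var Val)) (Vp : Proc → Var → ℕ) (fv T : Var → ℕ)
    (m m' : Var → Val) (p : Proc) (x : Var) (w : Val)
    (hVp : ∀ q, Vp q = T)
    (hmsg : ∀ y, ∃ V, (⟨y, m y, T y, V⟩ : RAMsg Var Val) ∈ mem)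
    (hm'x : m' x = w) (hm' : ∀ y, y ≠ x → m' y = m y)
    (htimes : ∀ μ ∈ mem, μ.time ≤ T μ.var)
    (hfv : ∀ y, fv y ≤ T y) :
    ∃ q' : RAState Proc Var Val,
      TauReach (RAModel Proc Var Val)
        ⟨insert ⟨x, w, T x + 1, Function.update T x (T x + 1)⟩ mem,
          Function.update Vp p (Function.update T x (T x + 1)), fv⟩ q' ∧
      (RAModel Proc Var Val).Stable q' ∧ RAInv m' q' := by
  set t := T x + 1 with ht
  set T' := Function.update T x t with hT'
  set μnew : RAMsg Var Val := ⟨x, w, t, T'⟩ with hμnew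
  set mem' := insert μnew mem with hmem'
  have hTle : ∀ y, T y ≤ T' y := by
    intro y
    rcases eq_or_ne y x with rfl | hy
    · simp [hT', ht]
    · simp [hT', Function.update_of_ne hy]
  have hjoin : viewJoin T T' = T' := by
    funext y
    exact max_eq_right (hTle y)
  have hspread := ra_tau_spread (Val := Val) mem' fv μnew (Set.mem_insert _ _)
    T T' (by simp [hμnew, hT', ht]) (by simpa [hμnew] using hjoin)
    (Finset.univ : Finset Proc).toList
    (Function.update Vp p T')
    (by
      intro q
      rcases eq_or_ne q p with rfl | hq
      · right; simp
      · left; simp [Function.update_of_ne hq, hVp])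
  have hall : (fun q => if q ∈ (Finset.univ : Finset Proc).toList then T'
      else Function.update Vp p T' q) = fun _ => T' := by
    funext q
    simp
  rw [hall] at hspread
  refine ⟨⟨mem', fun _ => T', fv⟩, hspread, ?_, ?_⟩
  · apply ra_stable _ T' (fun _ => rfl)
    intro μ hμ
    rcases hμ with rfl | hμ
    · simp [hμnew, hT']
    · exact le_trans (htimes μ hμ) (hTle μ.var)
  · refine ⟨T', fun _ => rfl, ?_, ?_, ?_⟩
    · intro y
      rcases eq_or_ne y x with rfl | hy
      · exact ⟨T', by
          left
          simp [hμnew, hm'x, hT']⟩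
      · obtain ⟨V, hV⟩ := hmsg y
        exact ⟨V, Or.inr (by rw [hm' y hy, hT', Function.update_of_ne hy]; exact hV)⟩
    · intro μ hμ
      rcases hμ with rfl | hμ
      · simp [hμnew, hT']
      · exact le_trans (htimes μ hμ) (hTle μ.var)
    · intro y
      exact le_trans (hfv y) (hTle y)

/-- RA is well-behaved. -/
lemma ra_wellBehaved [Fintype Proc] [DecidableEq Proc] [DecidableEq Var] [Zero Val] :
    WellBehaved (RAModel Proc Var Val) := by
  refine ⟨RAInv, ?_, ?_, ?_⟩
  · rintro m q ⟨T, hVp, hmsg, htimes, hfv⟩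
    exact ra_stable q T hVp htimes
  · refine ⟨fun _ => 0, fun _ => rfl, ?_, ?_, ?_⟩
    · intro x
      exact ⟨fun _ => 0, ⟨x, rfl⟩⟩
    · rintro μ ⟨x, rfl⟩
      exact le_refl 0
    · intro y
      exact le_refl 0
  · rintro m q ⟨T, hVp, hmsg, htimes, hfv⟩ l m' hstep
    cases hstep with
    | write p x v =>
        have hfresh : ∀ μ ∈ q.mem, μ.var = x → μ.time ≠ T x + 1 := by
          intro μ hμ hvar hcontra
          have := htimes μ hμ
          rw [hvar, hcontra] at this
          omega
        have hs := RAStep.write (Proc := Proc) (Var := Var) (Val := Val) q p x v (T x + 1)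
          (by rw [hVp p]; omega) hfresh
        rw [hVp p] at hs
        obtain ⟨q', htau, hstab, hinv⟩ := ra_write_aux q.mem q.view q.fview T m
          (Function.update m x v) p x v hVp hmsg (by simp)
          (fun y hy => Function.update_of_ne hy _ _) htimes hfv
        exact ⟨_, q', hs, htau, hstab, hinv⟩
    | read p x =>
        obtain ⟨V, hV⟩ := hmsg x
        have hs := RAStep.read (Proc := Proc) (Var := Var) (Val := Val) q p x (m x) V
          (by rw [hVp p]; exact hV)
        exact ⟨q, q, hs, Relation.ReflTransGen.refl, ra_stable q T hVp htimes,
          ⟨T, hVp, hmsg, htimes, hfv⟩⟩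
    | rmw p x vnew =>
        obtain ⟨V, hV⟩ := hmsg x
        have hfresh : ∀ μ ∈ q.mem, μ.var = x → μ.time ≠ q.view p x + 1 := by
          intro μ hμ hvar hcontra
          have := htimes μ hμ
          rw [hvar, hcontra, hVp p] at this
          omega
        have hs := RAStep.rmw (Proc := Proc) (Var := Var) (Val := Val) q p x (m x) vnew V
          (by rw [hVp p]; exact hV) hfresh
        rw [hVp p] at hs
        obtain ⟨q', htau, hstab, hinv⟩ := ra_write_aux q.mem q.view q.fview T m
          (Function.update m x vnew) p x vnew hVp hmsg (by simp)
          (fun y hy => Function.update_of_ne hy _ _) htimes hfv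
        exact ⟨_, q', hs, htau, hstab, hinv⟩
    | fence p =>
        have hjoin : viewJoin (q.view p) q.fview = T := by
          funext y
          rw [hVp p]
          exact max_eq_left (hfv y)
        have hs := RAStep.fence (Proc := Proc) (Var := Var) (Val := Val) q p
        rw [hjoin] at hs
        have hupd : Function.update q.view p T = q.view := by
          funext r
          rcases eq_or_ne r p with rfl | hr
          · simp [hVp r]
          · simp [Function.update_of_ne hr]
        rw [hupd] at hs
        refine ⟨⟨q.mem, q.view, T⟩, ⟨q.mem, q.view, T⟩, hs, Relation.ReflTransGen.refl, ?_, ?_⟩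
        · exact ra_stable _ T hVp htimes
        · exact ⟨T, hVp, hmsg, htimes, fun y => le_refl _⟩

end Aux

/-- Each of the memory models SCM, TSO, and RA is well-behaved. -/
theorem scm_tso_ra_wellBehaved (Proc Var Val : Type) [Fintype Proc] [DecidableEq Proc]
    [DecidableEq Var] [Zero Val] :
    WellBehaved (SCMModel Proc Var Val) ∧ WellBehaved (TSOModel Proc Var Val) ∧
      WellBehaved (RAModel Proc Var Val) :=
  ⟨scm_wellBehaved, tso_wellBehaved, ra_wellBehaved⟩

end WMM
end

section
/- Every RW-RBW observable memory sequence σ1 and every observable memory sequence σ2 with procs(σ1) ∩ procs(σ2) = ∅ are weakly mergeable in SCM. -/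
set_option autoImplicit false

namespace WMM

universe u v

/-! ### Auxiliary lemmas for SCM weak merge -/

section SCMAux

lemma ltspath_append {S : Type u} {L : Type v} {step : S → L → S → Prop}
    {a b c : S} {π1 π2 : List L} (h1 : LTSPath step a π1 b) (h2 : LTSPath step b π2 c) :
    LTSPath step a (π1 ++ π2) c := by
  induction h1 with
  | nil => simpa
  | cons hs _ ih => exact LTSPath.cons hs (ih h2)

lemma ltspath_split {S : Type u} {L : Type v} {step : S → L → S → Prop}
    {a c : S} (π1 : List L) {π2 : List L} (h : LTSPath step a (π1 ++ π2) c) :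
    ∃ b, LTSPath step a π1 b ∧ LTSPath step b π2 c := by
  induction π1 generalizing a with
  | nil => exact ⟨a, LTSPath.nil a, h⟩
  | cons l t ih =>
    cases h with
    | cons hs hp =>
      obtain ⟨b, hb1, hb2⟩ := ih hp
      exact ⟨b, LTSPath.cons hs hb1, hb2⟩

lemma shuffle_nil_left {α : Type u} (s : List α) : Shuffle [] s s := by
  induction s using List.reverseRecOn with
  | nil => exact Shuffle.nil
  | append_singleton t x ih => exact Shuffle.right x ih

lemma shuffle_nil_right {α : Type u} (s : List α) : Shuffle s [] s := by
  induction s using List.reverseRecOn with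
  | nil => exact Shuffle.nil
  | append_singleton t x ih => exact Shuffle.left x ih

lemma shuffle_append_right {α : Type u} {s1 s2 s : List α} (h : Shuffle s1 s2 s) (t : List α) :
    Shuffle s1 (s2 ++ t) (s ++ t) := by
  induction t using List.reverseRecOn with
  | nil => simpa
  | append_singleton t x ih =>
    rw [← List.append_assoc, ← List.append_assoc]
    exact Shuffle.right x ih

lemma shuffle_append_left {α : Type u} {s1 s2 s : List α} (h : Shuffle s1 s2 s) (t : List α) :
    Shuffle (s1 ++ t) s2 (s ++ t) := by
  induction t using List.reverseRecOn with
  | nil => simpa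
  | append_singleton t x ih =>
    rw [← List.append_assoc, ← List.append_assoc]
    exact Shuffle.left x ih

variable {Proc Var Val : Type} [DecidableEq Var]

/-- SCM step restricted to memory-event labels. -/
def SStep (m : Var → Val) (e : MemEv Proc Var Val) (m' : Var → Val) : Prop :=
  SCMStep Proc Var Val m (some e) m'

lemma scmstep_some {m m1 : Var → Val} {l : Option (MemEv Proc Var Val)}
    (h : SCMStep Proc Var Val m l m1) :
    ∃ e, l = some e ∧ SStep m e m1 := by
  cases h with
  | write p x v => exact ⟨_, rfl, SCMStep.write m p x v⟩
  | read p x => exact ⟨_, rfl, SCMStep.read m p x⟩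
  | rmw p x vnew => exact ⟨_, rfl, SCMStep.rmw m p x vnew⟩
  | fence p => exact ⟨_, rfl, SCMStep.fence m p⟩

lemma scm_path_erase [Zero Val] {q q' : Var → Val} {π : List (Option (MemEv Proc Var Val))}
    (h : LTSPath (SCMModel Proc Var Val).step q π q') :
    LTSPath (SStep (Proc := Proc) (Var := Var) (Val := Val)) q π.reduceOption q' := by
  induction h with
  | nil s => exact LTSPath.nil s
  | cons hs hp ih =>
    obtain ⟨e, rfl, hs'⟩ := scmstep_some hs
    rw [List.reduceOption_cons_of_some]
    exact LTSPath.cons hs' ih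

lemma scm_path_restore [Zero Val] {q q' : Var → Val} {σ : List (MemEv Proc Var Val)}
    (h : LTSPath (SStep (Proc := Proc) (Var := Var) (Val := Val)) q σ q') :
    LTSPath (SCMModel Proc Var Val).step q (σ.map some) q' := by
  induction h with
  | nil s => exact LTSPath.nil s
  | cons hs hp ih => exact LTSPath.cons hs ih

lemma reduceOption_map_some' {α : Type u} (l : List α) : (l.map some).reduceOption = l := by
  induction l with
  | nil => rfl
  | cons a t ih => simp [List.reduceOption_cons_of_some, ih]

lemma reads_path_fix {m m' : Var → Val} {ρ : List (MemEv Proc Var Val)}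
    (h : LTSPath (SStep (Proc := Proc) (Var := Var) (Val := Val)) m ρ m')
    (hr : ∀ e ∈ ρ, MemEv.isRead e) : m' = m := by
  induction h with
  | nil s => rfl
  | cons hs hp ih =>
    rename_i s s1 s2 e ls
    obtain ⟨x, v, he⟩ := hr e (List.mem_cons_self)
    cases hs with
    | write p z w => simp at he
    | read p z =>
      exact ih (fun e' he' => hr e' (List.mem_cons_of_mem _ he'))
    | rmw p z vnew => simp at he
    | fence p => simp at he

/-- Every read to variable `x` in `δ` is preceded within `δ` by a write to `x`. -/
def CoveredVar (δ : List (MemEv Proc Var Val)) (x : Var) : Prop :=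
  ∀ (j : ℕ) (e : MemEv Proc Var Val) (v : Val), δ[j]? = some e → e.act = MemAct.read x v →
    ∃ i, i < j ∧ ∃ (e' : MemEv Proc Var Val) (u : Val),
      δ[i]? = some e' ∧ e'.act = MemAct.write x u

lemma coveredVar_tail {e0 : MemEv Proc Var Val} {δ : List (MemEv Proc Var Val)} {x : Var}
    (h : CoveredVar (e0 :: δ) x) (h0 : ∀ u : Val, e0.act ≠ MemAct.write x u) :
    CoveredVar δ x := by
  intro j e v hj he
  obtain ⟨i, hi, e', u, hie, hw⟩ := h (j + 1) e v (by simpa using hj) he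
  cases i with
  | zero =>
    have h00 : e0 = e' := by simpa using hie
    exact absurd (h00 ▸ hw) (h0 u)
  | succ i =>
    exact ⟨i, by omega, e', u, by simpa using hie, hw⟩

lemma scm_retarget : ∀ {δ : List (MemEv Proc Var Val)} {m m_end : Var → Val},
    LTSPath (SStep (Proc := Proc) (Var := Var) (Val := Val)) m δ m_end → IsRW δ →
    ∀ m' : Var → Val, (∀ x : Var, m' x ≠ m x → CoveredVar δ x) →
    ∃ m_end', LTSPath (SStep (Proc := Proc) (Var := Var) (Val := Val)) m' δ m_end' := by
  intro δ m m_end h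
  induction h with
  | nil s => exact fun _ m' _ => ⟨m', LTSPath.nil m'⟩
  | cons hs hp ih =>
    rename_i s s1 s2 e ls
    intro hrw m' hcov
    have hrw' : IsRW ls := fun e' he' => hrw e' (List.mem_cons_of_mem _ he')
    cases hs with
    | write p z v =>
      have hc : ∀ y : Var, Function.update m' z v y ≠ Function.update s z v y →
          CoveredVar ls y := by
        intro y hy
        have hyz : y ≠ z := by
          intro hh; subst hh; simp at hy
        have hy' : m' y ≠ s y := by
          simpa [Function.update_of_ne hyz] using hy
        refine coveredVar_tail (hcov y hy') ?_
        intro u hu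
        have hzy : z = y := by injection hu
        exact hyz hzy.symm
      obtain ⟨mf, hmf⟩ := ih hrw' (Function.update m' z v) hc
      exact ⟨mf, LTSPath.cons (SCMStep.write m' p z v) hmf⟩
    | read p z =>
      have hz : m' z = s z := by
        by_contra hne
        obtain ⟨i, hi, _⟩ :=
          hcov z hne 0 ⟨p, MemAct.read z (s z)⟩ (s z) (by simp) rfl
        omega
      have hc : ∀ y : Var, m' y ≠ s y → CoveredVar ls y := by
        intro y hy
        refine coveredVar_tail (hcov y hy) ?_
        intro u hu
        simp at hu
      obtain ⟨mf, hmf⟩ := ih hrw' m' hc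
      refine ⟨mf, LTSPath.cons ?_ hmf⟩
      have hst := SCMStep.read m' p z
      rwa [hz] at hst
    | rmw p z vnew =>
      rcases hrw _ (List.mem_cons_self) with ⟨x, v, hh⟩ | ⟨x, v, hh⟩ <;> simp at hh
    | fence p =>
      rcases hrw _ (List.mem_cons_self) with ⟨x, v, hh⟩ | ⟨x, v, hh⟩ <;> simp at hh

/-- Boolean test for read events. -/
def isReadB (e : MemEv Proc Var Val) : Bool :=
  match e.act with
  | MemAct.read _ _ => true
  | _ => false

lemma isReadB_true {e : MemEv Proc Var Val} (h : isReadB e = true) :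
    ∃ x v, e.act = MemAct.read x v := by
  rcases e with ⟨p, a⟩
  cases a <;> simp [isReadB] at h ⊢

lemma isReadB_false {e : MemEv Proc Var Val} (h : isReadB e = false)
    {x : Var} {v : Val} (he : e.act = MemAct.read x v) : False := by
  rcases e with ⟨p, a⟩
  cases a <;> simp [isReadB] at h he <;> simp_all

end SCMAux

/-- every RW-RBW observable memory sequence `σ1` and every observable
memory sequence `σ2` with disjoint processes are weakly mergeable in SCM. -/
theorem scm_weak_merge (Proc Var Val : Type) [Fintype Proc] [DecidableEq Var] [Zero Val]
    (σ1 σ2 : List (MemEv Proc Var Val))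
    (hRW : IsRW σ1) (hRBW : IsRBW σ1)
    (hdisj : memProcs σ1 ∩ memProcs σ2 = ∅) :
    WeaklyMergeable (SCMModel Proc Var Val) σ1 σ2 := by
  intro q0 _ h1 h2
  obtain ⟨π1, qe1, hp1, hr1⟩ := h1
  obtain ⟨π2, q2, hp2, hr2⟩ := h2
  have hp1' : LTSPath (SStep (Proc := Proc) (Var := Var) (Val := Val)) q0 σ1 qe1 :=
    hr1 ▸ scm_path_erase hp1
  have hp2' : LTSPath (SStep (Proc := Proc) (Var := Var) (Val := Val)) q0 σ2 q2 :=
    hr2 ▸ scm_path_erase hp2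
  set ρ := σ1.takeWhile isReadB with hρ
  set δ := σ1.dropWhile isReadB with hδ
  have hσ1 : σ1 = ρ ++ δ := (List.takeWhile_append_dropWhile (p := isReadB) (l := σ1)).symm
  rw [hσ1] at hp1'
  obtain ⟨qm, hpρ, hpδ⟩ := ltspath_split ρ hp1'
  have hqm : qm = q0 := by
    refine reads_path_fix hpρ ?_
    intro e he
    exact isReadB_true (List.mem_takeWhile_imp he)
  subst hqm
  -- all reads in δ are covered
  have hcov : ∀ x : Var, CoveredVar δ x := by
    intro x j e v hj he
    obtain ⟨e0, δ', hδc⟩ : ∃ e0 δ', δ = e0 :: δ' := by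
      cases hd : δ with
      | nil => rw [hd] at hj; simp at hj
      | cons a b => exact ⟨a, b, rfl⟩
    have he0r : isReadB e0 = false := by
      have := List.head?_dropWhile_not isReadB σ1
      rw [← hδ, hδc] at this
      simpa using this
    have he0m : e0 ∈ σ1 := by
      rw [hσ1, hδc]; exact List.mem_append_right _ (List.mem_cons_self)
    obtain ⟨x0, v0, hw0⟩ : ∃ x0 v0, e0.act = MemAct.write x0 v0 := by
      rcases hRW e0 he0m with ⟨x0, v0, hw⟩ | ⟨x0, v0, hr⟩
      · exact ⟨x0, v0, hw⟩
      · exact (isReadB_false he0r hr).elim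
    have hn0 : σ1[ρ.length]? = some e0 := by
      rw [hσ1, List.getElem?_append_right (Nat.le_refl _), hδc]
      simp
    have hj0 : j ≠ 0 := by
      intro hj0
      subst hj0
      rw [hδc] at hj
      have hee : e0 = e := by simpa using hj
      rw [← hee, hw0] at he
      cases he
    have hnj : σ1[ρ.length + j]? = some e := by
      rw [hσ1, List.getElem?_append_right (Nat.le_add_right _ _)]
      simpa using hj
    by_cases hxx : x0 = x
    · subst hxx
      refine ⟨0, by omega, e0, v0, ?_, hw0⟩
      rw [hδc]; simp
    · obtain ⟨k, e', u, hk1, hk2, hke, hke'⟩ :=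
        hRBW ρ.length (ρ.length + j) e0 e x0 x v0 v (by omega) hn0 hnj hw0 he hxx
      refine ⟨k - ρ.length, by omega, e', u, ?_, hke'⟩
      have : σ1[k]? = δ[k - ρ.length]? := by
        rw [hσ1, List.getElem?_append_right (by omega)]
      rw [← this]; exact hke
  have hrwδ : IsRW δ := by
    intro e he
    exact hRW e (hσ1 ▸ List.mem_append_right _ he)
  obtain ⟨qf, hqf⟩ := scm_retarget hpδ hrwδ q2 (fun x _ => hcov x)
  refine ⟨ρ ++ σ2 ++ δ, ?_, ?_⟩
  · rw [hσ1]
    exact shuffle_append_left (shuffle_append_right (shuffle_nil_right ρ) σ2) δ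
  · refine ⟨(ρ ++ σ2 ++ δ).map some, qf, ?_, reduceOption_map_some' _⟩
    refine scm_path_restore ?_
    rw [List.append_assoc]
    exact ltspath_append hpρ (ltspath_append hp2' hqf)

end WMM
end
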